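/- Suppose the family Υ_n is admissible relative to the sets Ω(n,m) for G ↷ (X,ν). Then for each m, every weak-* limit point ζ_m of the sequence (ζ_{n,m})_n as n → ∞ satisfies ζ_m(ℝ) ≥ 1 − D(m), ζ_m is supported in {t ∈ ℝ : 1/C(m) ≤ |t| ≤ C(m)}, and in particular the support of ζ_m is nonempty and bounded away from 0. -/

import Mathlib

open MeasureTheory Filter Metric Set
open scoped ENNReal

namespace StableRatio

variable {G : Type*} [Group G] [Countable G]

/-- The Radon–Nikodym derivative `d(ν∘g)/dν`, where `(ν∘g)(A) = ν(gA)`,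
so that `ν∘g` is the pushforward of `ν` under the action of `g⁻¹`. -/
noncomputable def RN {Z : Type*} [MeasurableSpace Z] (act : G → Z → Z) (ν : Measure Z)
    (g : G) (z : Z) : ℝ :=
  ((ν.map (act g⁻¹)).rnDeriv ν z).toReal

/-- `R(g,η) = log (d(ν∘g)/dν)(η)`. -/
noncomputable def Rlog {Z : Type*} [MeasurableSpace Z] (act : G → Z → Z) (ν : Measure Z)
    (g : G) (z : Z) : ℝ :=
  Real.log (RN act ν g z)

/-- A family of functions `Υ n : G → Z → Z → ℝ` is admissible relative to a family of
closed subsets `Ω n m ⊆ Z`, with constants `D C : ℕ → ℝ`, `N : ℕ → ℕ` and moduli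
`fbd : ℕ → ℕ → ℝ`.  Here `dZ` is the metric on `Z` and `act` the (quasi-invariant)
action of `G` on `(Z,ν)`. -/
structure IsRelAdmissible {Z : Type*} [MeasurableSpace Z] [TopologicalSpace Z]
    (act : G → Z → Z) (dZ : Z → Z → ℝ) (ν : Measure Z) [SFinite ν]
    (Υ : ℕ → G → Z → Z → ℝ) (Ω : ℕ → ℕ → Set Z)
    (D C : ℕ → ℝ) (N : ℕ → ℕ) (fbd : ℕ → ℕ → ℝ) : Prop where
  meas_Υ : ∀ (n : ℕ) (g : G), Measurable (Function.uncurry (Υ n g))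
  nonneg_Υ : ∀ (n : ℕ) (g : G) (b b' : Z), 0 ≤ Υ n g b b'
  closed_Ω : ∀ n m : ℕ, IsClosed (Ω n m)
  D_pos : ∀ m : ℕ, 0 < D m
  D_lim : Tendsto D atTop (nhds 0)
  Ω_big : ∀ n m : ℕ, ENNReal.ofReal (1 - D m) < ν (Ω n m)
  f_lim : ∀ m : ℕ, Tendsto (fbd m) atTop (nhds 0)
  close : ∀ (n m : ℕ) (g : G) (b b' : Z), b ∈ Ω n m → 0 < Υ n g b b' →
    dZ b b' < fbd m n ∧ dZ (act g⁻¹ b) (act g⁻¹ b') < fbd m n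
  C_pos : ∀ m : ℕ, 0 < C m
  N_pos : ∀ m : ℕ, 0 < N m
  R_bound : ∀ (m n : ℕ), N m < n → ∀ g : G, ∀ᵐ p ∂(ν.prod ν),
    p.1 ∈ Ω n m → 0 < Υ n g p.1 p.2 →
      (|Rlog act ν g⁻¹ p.1| + |Rlog act ν g⁻¹ p.2| < C m ∧
        1 / C m ≤ |Rlog act ν g⁻¹ p.1 - Rlog act ν g⁻¹ p.2|)
  normalized : ∀ (n : ℕ) (b : Z),
    (∑' g : G, ∫⁻ b', ENNReal.ofReal (Υ n g b b') ∂ν) = 1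
  bdd₁ : ∀ (m n : ℕ), N m < n → ∀ᵐ b' ∂ν,
    (∫⁻ b in Ω n m, ∑' g : G, ENNReal.ofReal (Υ n g b b') ∂ν) ≤ ENNReal.ofReal (C m)
  bdd₂ : ∀ (m n : ℕ), N m < n → ∀ᵐ b' ∂ν,
    (∫⁻ b in Ω n m, ∑' g : G, ENNReal.ofReal (Υ n g b (act g b') * RN act ν g b') ∂ν)
      ≤ ENNReal.ofReal (C m)
  bdd₃ : ∀ (m n : ℕ), N m < n → ∀ᵐ b ∂ν,
    (∫⁻ b', ∑' g : G, Set.indicator (Ω n m) (fun _ => (1 : ℝ≥0∞)) (act g b)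
        * ENNReal.ofReal (Υ n g (act g b) b' * RN act ν g b') ∂ν) ≤ ENNReal.ofReal (C m)

/-- The measure `θ` on `ℝ` with `dθ = (1/2) e^{-|t|} dt`. -/
noncomputable def theta : Measure ℝ :=
  MeasureTheory.volume.withDensity (fun t : ℝ => ENNReal.ofReal ((1 / 2) * Real.exp (-|t|)))

instance : SFinite theta := by unfold theta; infer_instance

/-- The measure `ζ_{n,m}` on `ℝ`:
`ζ_{n,m}(E) = Σ_{g∈G} ∫∫ 1_E(R(g⁻¹,b') − R(g⁻¹,b)) 1_{Ω(n,m)}(b) Υ_n(g,b,b') dν(b) dν(b')`. -/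
noncomputable def zeta {Z : Type*} [MeasurableSpace Z] (act : G → Z → Z) (ν : Measure Z)
    [SFinite ν] (Υ : ℕ → G → Z → Z → ℝ) (Ω : ℕ → ℕ → Set Z) (n m : ℕ) : Measure ℝ :=
  Measure.sum fun g : G =>
    ((ν.prod ν).withDensity fun p =>
        Set.indicator (Ω n m) (fun _ => (1 : ℝ≥0∞)) p.1 * ENNReal.ofReal (Υ n g p.1 p.2)).map
      fun p => Rlog act ν g⁻¹ p.2 - Rlog act ν g⁻¹ p.1

/-- The measure `ζ_{n,b}` on `ℝ`:
`ζ_{n,b}(E) = Σ_{g∈G} ∫ 1_E(R(g⁻¹,b') − R(g⁻¹,b)) Υ_n(g,b,b') dν(b')`. -/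
noncomputable def zetaB {Z : Type*} [MeasurableSpace Z] (act : G → Z → Z) (ν : Measure Z)
    (Υ : ℕ → G → Z → Z → ℝ) (n : ℕ) (b : Z) : Measure ℝ :=
  Measure.sum fun g : G =>
    (ν.withDensity fun b' => ENNReal.ofReal (Υ n g b b')).map
      fun b' => Rlog act ν g⁻¹ b' - Rlog act ν g⁻¹ b

/-- `μ` is a weak-* limit point of the sequence `μs`, i.e. the limit of some subsequence
in the weak-* topology (integration against bounded continuous functions). -/
def WeakStarLimitPoint (μs : ℕ → Measure ℝ) (μ : Measure ℝ) : Prop :=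
  ∃ φ : ℕ → ℕ, StrictMono φ ∧
    ∀ f : BoundedContinuousFunction ℝ ℝ,
      Tendsto (fun k => ∫ x, f x ∂(μs (φ k))) atTop (nhds (∫ x, f x ∂μ))

/-- `T` belongs to the (topological) support of the measure `μ` on `ℝ`. -/
def MemSupport (μ : Measure ℝ) (T : ℝ) : Prop :=
  ∀ ε : ℝ, 0 < ε → 0 < μ (Metric.ball T ε)

/-- `r` belongs to the ratio set of the action `act` of `G` on `(Z,μ)`. -/
def InRatioSet {Z : Type*} [MeasurableSpace Z] (act : G → Z → Z) (μ : Measure Z)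
    (r : ℝ) : Prop :=
  ∀ A : Set Z, MeasurableSet A → 0 < μ A → ∀ ε : ℝ, 0 < ε →
    ∃ A' : Set Z, MeasurableSet A' ∧ A' ⊆ A ∧ 0 < μ A' ∧
      ∃ g : G, g ≠ 1 ∧ act g '' A' ⊆ A ∧ ∀ b ∈ A', |RN act μ g b - r| ≤ ε

/-- `r` belongs to the stable ratio set of the action `act` of `G` on `(Z,ν)`:
`r` is in the ratio set of the product of the action with every probability
measure preserving action of `G`. -/
def InStableRatioSet {Z : Type*} [MeasurableSpace Z] (act : G → Z → Z) (ν : Measure Z)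
    [SFinite ν] (r : ℝ) : Prop :=
  ∀ (Y : Type) [MeasurableSpace Y] (κ : Measure Y) [IsProbabilityMeasure κ]
    (aY : G → Y → Y),
    (∀ g : G, Measurable (aY g)) → aY 1 = id →
    (∀ g h : G, aY (g * h) = aY g ∘ aY h) →
    (∀ g : G, κ.map (aY g) = κ) →
    InRatioSet (fun g (p : Z × Y) => (act g p.1, aY g p.2)) (ν.prod κ) r

/-- The operator `W_{n,m}`. -/
noncomputable def Wop {Z : Type*} [MeasurableSpace Z] (ν : Measure Z)
    (Υ : ℕ → G → Z → Z → ℝ) (Ω : ℕ → ℕ → Set Z) (n m : ℕ)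
    (f : Z → ℝ → ℝ) (b : Z) (t : ℝ) : ℝ :=
  ∑' g : G, ∫ b', Set.indicator (Ω n m) (fun _ => (1 : ℝ)) b * Υ n g b b' * f b' t ∂ν

/-- The operator `X_{n,m}`. -/
noncomputable def Xop {Z : Type*} [MeasurableSpace Z] (act : G → Z → Z) (ν : Measure Z)
    (Υ : ℕ → G → Z → Z → ℝ) (Ω : ℕ → ℕ → Set Z) (n m : ℕ)
    (f : Z → ℝ → ℝ) (b : Z) (t : ℝ) : ℝ :=
  ∑' g : G, ∫ b', Set.indicator (Ω n m) (fun _ => (1 : ℝ)) b * Υ n g b b' *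
      f (act g⁻¹ b') (t + Rlog act ν g⁻¹ b') ∂ν

/-- The operator `Y_{n,m}`. -/
noncomputable def Yop {Z : Type*} [MeasurableSpace Z] (act : G → Z → Z) (ν : Measure Z)
    (Υ : ℕ → G → Z → Z → ℝ) (Ω : ℕ → ℕ → Set Z) (n m : ℕ)
    (f : Z → ℝ → ℝ) (b : Z) (t : ℝ) : ℝ :=
  ∑' g : G, ∫ b', Set.indicator (Ω n m) (fun _ => (1 : ℝ)) b * Υ n g b b' *
      f (act g⁻¹ b) (t + Rlog act ν g⁻¹ b') ∂ν

/-- The operator `L_{n,m}`. -/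
noncomputable def Lop {Z : Type*} [MeasurableSpace Z] (act : G → Z → Z) (ν : Measure Z)
    (Υ : ℕ → G → Z → Z → ℝ) (Ω : ℕ → ℕ → Set Z) (n m : ℕ)
    (f : Z → ℝ → ℝ) (b : Z) (t : ℝ) : ℝ :=
  ∑' g : G, ∫ b', Set.indicator (Ω n m) (fun _ => (1 : ℝ)) b * Υ n g b b' *
      f b (t + Rlog act ν g⁻¹ b' - Rlog act ν g⁻¹ b) ∂ν

section Aux

variable {X : Type*} [MeasurableSpace X]

lemma measurable_Rlog (act : G → X → X) (ν : Measure X) (g : G) :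
    Measurable (Rlog act ν g) :=
  Real.measurable_log.comp (Measure.measurable_rnDeriv _ _).ennreal_toReal

lemma measurable_RlogDiff (act : G → X → X) (ν : Measure X) (g : G) :
    Measurable fun p : X × X => Rlog act ν g⁻¹ p.2 - Rlog act ν g⁻¹ p.1 :=
  ((measurable_Rlog act ν g⁻¹).comp measurable_snd).sub
    ((measurable_Rlog act ν g⁻¹).comp measurable_fst)

lemma measurable_w (Υ : ℕ → G → X → X → ℝ) (Ω : ℕ → ℕ → Set X) (n m : ℕ) (g : G)
    (hΩ : MeasurableSet (Ω n m)) (hmeas : Measurable (Function.uncurry (Υ n g))) :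
    Measurable fun p : X × X =>
      Set.indicator (Ω n m) (fun _ => (1 : ℝ≥0∞)) p.1 * ENNReal.ofReal (Υ n g p.1 p.2) :=
  ((measurable_const.indicator hΩ).comp measurable_fst).mul
    (ENNReal.measurable_ofReal.comp hmeas)

lemma zeta_univ (act : G → X → X) (ν : Measure X) [SFinite ν]
    (Υ : ℕ → G → X → X → ℝ) (Ω : ℕ → ℕ → Set X) (n m : ℕ)
    (hΩ : MeasurableSet (Ω n m))
    (hmeas : ∀ g : G, Measurable (Function.uncurry (Υ n g)))
    (hnorm : ∀ b : X, (∑' g : G, ∫⁻ b', ENNReal.ofReal (Υ n g b b') ∂ν) = 1) :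
    zeta act ν Υ Ω n m Set.univ = ν (Ω n m) := by
  have key : ∀ g : G,
      (((ν.prod ν).withDensity fun p =>
        Set.indicator (Ω n m) (fun _ => (1 : ℝ≥0∞)) p.1 * ENNReal.ofReal (Υ n g p.1 p.2)).map
        fun p => Rlog act ν g⁻¹ p.2 - Rlog act ν g⁻¹ p.1) Set.univ
      = ∫⁻ p, Set.indicator (Ω n m) (fun _ => (1 : ℝ≥0∞)) p.1
          * ENNReal.ofReal (Υ n g p.1 p.2) ∂(ν.prod ν) := by
    intro g
    rw [Measure.map_apply (measurable_RlogDiff act ν g) MeasurableSet.univ,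
      Set.preimage_univ, withDensity_apply _ MeasurableSet.univ, Measure.restrict_univ]
  rw [zeta, Measure.sum_apply _ MeasurableSet.univ]
  rw [tsum_congr key]
  rw [← lintegral_tsum fun g => (measurable_w Υ Ω n m g hΩ (hmeas g)).aemeasurable]
  have h1 : (fun p : X × X => ∑' g : G, Set.indicator (Ω n m) (fun _ => (1 : ℝ≥0∞)) p.1
      * ENNReal.ofReal (Υ n g p.1 p.2))
      = fun p : X × X => Set.indicator (Ω n m) (fun _ => (1 : ℝ≥0∞)) p.1
          * ∑' g : G, ENNReal.ofReal (Υ n g p.1 p.2) := by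
    funext p; exact ENNReal.tsum_mul_left
  rw [show (∫⁻ p, ∑' g : G, Set.indicator (Ω n m) (fun _ => (1 : ℝ≥0∞)) p.1
      * ENNReal.ofReal (Υ n g p.1 p.2) ∂(ν.prod ν)) = _ from congrArg (lintegral _) h1]
  have hmS : Measurable fun p : X × X => Set.indicator (Ω n m) (fun _ => (1 : ℝ≥0∞)) p.1
      * ∑' g : G, ENNReal.ofReal (Υ n g p.1 p.2) := by
    exact ((measurable_const.indicator hΩ).comp measurable_fst).mul
      (Measurable.ennreal_tsum fun g => ENNReal.measurable_ofReal.comp (hmeas g))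
  rw [lintegral_prod _ hmS.aemeasurable]
  have h2 : ∀ b : X, (∫⁻ b', Set.indicator (Ω n m) (fun _ => (1 : ℝ≥0∞)) b
      * ∑' g : G, ENNReal.ofReal (Υ n g b b') ∂ν)
      = Set.indicator (Ω n m) (fun _ => (1 : ℝ≥0∞)) b := by
    intro b
    have hm1 : ∀ g : G, Measurable fun b' : X => ENNReal.ofReal (Υ n g b b') := fun g =>
      ENNReal.measurable_ofReal.comp ((hmeas g).comp measurable_prodMk_left)
    have hm2 : Measurable fun b' : X => ∑' g : G, ENNReal.ofReal (Υ n g b b') :=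
      Measurable.ennreal_tsum hm1
    rw [lintegral_const_mul _ hm2, lintegral_tsum fun g => (hm1 g).aemeasurable,
      hnorm b, mul_one]
  simp_rw [h2]
  rw [lintegral_indicator hΩ, setLIntegral_one]

lemma zeta_compl (act : G → X → X) (ν : Measure X) [SFinite ν]
    (Υ : ℕ → G → X → X → ℝ) (Ω : ℕ → ℕ → Set X) (n m : ℕ) (Cm : ℝ)
    (hΩ : MeasurableSet (Ω n m))
    (hmeas : ∀ g : G, Measurable (Function.uncurry (Υ n g)))
    (hbd : ∀ g : G, ∀ᵐ p ∂(ν.prod ν), p.1 ∈ Ω n m → 0 < Υ n g p.1 p.2 →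
      (|Rlog act ν g⁻¹ p.1| + |Rlog act ν g⁻¹ p.2| < Cm ∧
        1 / Cm ≤ |Rlog act ν g⁻¹ p.1 - Rlog act ν g⁻¹ p.2|)) :
    zeta act ν Υ Ω n m ({t : ℝ | 1 / Cm ≤ |t| ∧ |t| ≤ Cm}ᶜ) = 0 := by
  have hK : MeasurableSet {t : ℝ | 1 / Cm ≤ |t| ∧ |t| ≤ Cm} :=
    (measurableSet_le measurable_const measurable_id.abs).inter
      (measurableSet_le measurable_id.abs measurable_const)
  rw [zeta, Measure.sum_apply _ hK.compl]
  have key : ∀ g : G,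
      (((ν.prod ν).withDensity fun p =>
        Set.indicator (Ω n m) (fun _ => (1 : ℝ≥0∞)) p.1 * ENNReal.ofReal (Υ n g p.1 p.2)).map
        fun p => Rlog act ν g⁻¹ p.2 - Rlog act ν g⁻¹ p.1)
        ({t : ℝ | 1 / Cm ≤ |t| ∧ |t| ≤ Cm}ᶜ) = 0 := by
    intro g
    rw [Measure.map_apply (measurable_RlogDiff act ν g) hK.compl,
      withDensity_apply _ ((measurable_RlogDiff act ν g) hK.compl)]
    have hA : MeasurableSet ((fun p : X × X => Rlog act ν g⁻¹ p.2 - Rlog act ν g⁻¹ p.1) ⁻¹'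
        ({t : ℝ | 1 / Cm ≤ |t| ∧ |t| ≤ Cm}ᶜ)) := (measurable_RlogDiff act ν g) hK.compl
    have h0 : ∀ᵐ p ∂((ν.prod ν).restrict ((fun p : X × X =>
        Rlog act ν g⁻¹ p.2 - Rlog act ν g⁻¹ p.1) ⁻¹' ({t : ℝ | 1 / Cm ≤ |t| ∧ |t| ≤ Cm}ᶜ))),
        Set.indicator (Ω n m) (fun _ => (1 : ℝ≥0∞)) p.1 * ENNReal.ofReal (Υ n g p.1 p.2) = 0 := by
      filter_upwards [ae_restrict_of_ae (hbd g), ae_restrict_mem hA] with p hp hpA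
      by_cases h1 : p.1 ∈ Ω n m
      · by_cases h2 : 0 < Υ n g p.1 p.2
        · exfalso
          obtain ⟨hlt, hge⟩ := hp h1 h2
          refine hpA ⟨?_, ?_⟩
          · rwa [abs_sub_comm] at hge
          · calc |Rlog act ν g⁻¹ p.2 - Rlog act ν g⁻¹ p.1|
                ≤ |Rlog act ν g⁻¹ p.2| + |Rlog act ν g⁻¹ p.1| := abs_sub _ _
              _ = |Rlog act ν g⁻¹ p.1| + |Rlog act ν g⁻¹ p.2| := add_comm _ _
              _ ≤ Cm := hlt.le
        · rw [ENNReal.ofReal_eq_zero.2 (not_lt.1 h2), mul_zero]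
      · rw [Set.indicator_of_notMem h1, zero_mul]
    exact (lintegral_eq_zero_iff (measurable_w Υ Ω n m g hΩ (hmeas g))).2 h0
  rw [tsum_congr key, tsum_zero]

end Aux

theorem stmt15 {G X : Type*} [Group G] [Countable G]
    [MetricSpace X] [CompactSpace X] [MeasurableSpace X] [BorelSpace X]
    (act : G → X → X) (hact_one : act 1 = id)
    (hact_mul : ∀ g h : G, act (g * h) = act g ∘ act h)
    (hact_meas : ∀ g : G, Measurable (act g))
    (ν : Measure X) [IsProbabilityMeasure ν]
    (hqi : ∀ g : G, ν.map (act g) ≪ ν ∧ ν ≪ ν.map (act g))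
    (Υ : ℕ → G → X → X → ℝ) (Ω : ℕ → ℕ → Set X)
    (D C : ℕ → ℝ) (N : ℕ → ℕ) (fbd : ℕ → ℕ → ℝ)
    (hadm : IsRelAdmissible act (fun a b : X => dist a b) ν Υ Ω D C N fbd)
    (hD1 : ∀ m : ℕ, D m < 1) :
    ∀ m : ℕ, ∀ ζm : Measure ℝ, WeakStarLimitPoint (fun n => zeta act ν Υ Ω n m) ζm →
      ENNReal.ofReal (1 - D m) ≤ ζm Set.univ ∧
      ζm ({t : ℝ | 1 / C m ≤ |t| ∧ |t| ≤ C m}ᶜ) = 0 ∧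
      (∃ T : ℝ, MemSupport ζm T) ∧
      (∀ T : ℝ, MemSupport ζm T → 1 / C m ≤ |T| ∧ |T| ≤ C m) := by
    intro m ζm hlim
    obtain ⟨φ, hφ, hconv⟩ := hlim
    have hΩm : ∀ n : ℕ, MeasurableSet (Ω n m) := fun n => (hadm.closed_Ω n m).measurableSet
    have huniv : ∀ n : ℕ, zeta act ν Υ Ω n m Set.univ = ν (Ω n m) := fun n =>
      zeta_univ act ν Υ Ω n m (hΩm n) (hadm.meas_Υ n) (hadm.normalized n)
    have hKclosed : IsClosed {t : ℝ | 1 / C m ≤ |t| ∧ |t| ≤ C m} :=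
      (isClosed_le continuous_const continuous_abs).inter
        (isClosed_le continuous_abs continuous_const)
    have hcompl : ∀ n : ℕ, N m < n →
        zeta act ν Υ Ω n m ({t : ℝ | 1 / C m ≤ |t| ∧ |t| ≤ C m}ᶜ) = 0 := fun n hn =>
      zeta_compl act ν Υ Ω n m (C m) (hΩm n) (hadm.meas_Υ n) (hadm.R_bound m n hn)
    have hmassn : ∀ n : ℕ, (1 : ℝ) - D m ≤ ((zeta act ν Υ Ω n m) Set.univ).toReal := by
      intro n
      rw [huniv n]
      exact ((ENNReal.ofReal_le_iff_le_toReal (measure_ne_top ν _)).1 (hadm.Ω_big n m).le)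
    have hint1 : ∀ n : ℕ, ∫ x, (BoundedContinuousFunction.const ℝ (1 : ℝ)) x
        ∂(zeta act ν Υ Ω n m) = ((zeta act ν Υ Ω n m) Set.univ).toReal := by
      intro n; simp [integral_const, measureReal_def]
    have hLim : Tendsto (fun k => ((zeta act ν Υ Ω (φ k) m) Set.univ).toReal) atTop
        (nhds (∫ x, (BoundedContinuousFunction.const ℝ (1 : ℝ)) x ∂ζm)) :=
      (hconv (BoundedContinuousFunction.const ℝ (1 : ℝ))).congr fun k => hint1 (φ k)
    have hL : (1 : ℝ) - D m ≤ ∫ x, (BoundedContinuousFunction.const ℝ (1 : ℝ)) x ∂ζm :=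
      ge_of_tendsto' hLim fun k => hmassn (φ k)
    have hv : ∫ x, (BoundedContinuousFunction.const ℝ (1 : ℝ)) x ∂ζm = (ζm Set.univ).toReal := by
      simp [integral_const, measureReal_def]
    rw [hv] at hL
    have hDm1 : (0 : ℝ) < 1 - D m := by linarith [hD1 m]
    have hfin : ζm Set.univ ≠ ∞ := by
      intro h
      rw [h, ENNReal.toReal_top] at hL
      linarith
    haveI : IsFiniteMeasure ζm := ⟨lt_top_iff_ne_top.2 hfin⟩
    have hfirst : ENNReal.ofReal (1 - D m) ≤ ζm Set.univ :=
      ENNReal.ofReal_le_of_le_toReal hL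
    have hcompact : ∀ F : Set ℝ, IsCompact F → F ⊆ {t : ℝ | 1 / C m ≤ |t| ∧ |t| ≤ C m}ᶜ →
        ζm F = 0 := by
      intro F hF hFsub
      obtain ⟨f, hf0, hf1, hf01⟩ := exists_continuous_zero_one_of_isCompact' hF hKclosed
        (Set.disjoint_left.2 fun x hxF hxK => (hFsub hxF) hxK)
      set fb : BoundedContinuousFunction ℝ ℝ := BoundedContinuousFunction.mkOfBound f 1 (by
        intro x y
        rw [Real.dist_eq, abs_sub_le_iff]
        have h1 := hf01 x; have h2 := hf01 y
        constructor <;> [linarith [h1.2, h2.1]; linarith [h2.2, h1.1]]) with hfb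
      have hfbx : ∀ x, fb x = f x := fun _ => rfl
      have hzero : ∀ k : ℕ, N m < φ k → ∫ x, fb x ∂(zeta act ν Υ Ω (φ k) m) = 0 := by
        intro k hk
        have hsub : {x : ℝ | ¬ fb x = (0 : ℝ → ℝ) x} ⊆ {t : ℝ | 1 / C m ≤ |t| ∧ |t| ≤ C m}ᶜ := by
          intro x hx hxK
          exact hx (by simpa [hfbx] using hf0 hxK)
        have h0 : fb =ᵐ[zeta act ν Υ Ω (φ k) m] (0 : ℝ → ℝ) :=
          (ae_iff).2 (measure_mono_null hsub (hcompl _ hk))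
        calc ∫ x, fb x ∂(zeta act ν Υ Ω (φ k) m)
            = ∫ x, (0 : ℝ → ℝ) x ∂(zeta act ν Υ Ω (φ k) m) := integral_congr_ae h0
          _ = 0 := by simp
      have heq0 : ∫ x, fb x ∂ζm = 0 := by
        refine tendsto_nhds_unique (hconv fb) ?_
        refine Tendsto.congr' ?_ tendsto_const_nhds
        filter_upwards [eventually_gt_atTop (N m)] with k hk
        exact (hzero k (lt_of_lt_of_le hk hφ.le_apply)).symm
      haveI : IsFiniteMeasure (zeta act ν Υ Ω 0 m) := ⟨by
        rw [huniv 0]; exact measure_lt_top ν _⟩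
      have hind : (ζm F).toReal ≤ ∫ x, fb x ∂ζm := by
        have hFm := hF.measurableSet
        have hintind : ∫ x, Set.indicator F (fun _ => (1 : ℝ)) x ∂ζm = (ζm F).toReal := by
          rw [integral_indicator_const (1 : ℝ) hFm]; simp [measureReal_def]
        rw [← hintind]
        refine integral_mono ((integrable_const (1 : ℝ)).indicator hFm)
          (fb.integrable ζm) fun x => ?_
        by_cases hx : x ∈ F
        · rw [Set.indicator_of_mem hx, hfbx x]
          exact le_of_eq (by simpa using (hf1 hx).symm)
        · rw [Set.indicator_of_notMem hx, hfbx x]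
          exact (hf01 x).1
      rw [heq0] at hind
      have : (ζm F).toReal = 0 := le_antisymm hind ENNReal.toReal_nonneg
      exact ((ENNReal.toReal_eq_zero_iff _).1 this).resolve_right (measure_ne_top ζm F)
    have hζK : ζm ({t : ℝ | 1 / C m ≤ |t| ∧ |t| ≤ C m}ᶜ) = 0 := by
      rw [hKclosed.measurableSet.compl.measure_eq_iSup_isCompact ζm]
      refine le_antisymm ?_ zero_le
      exact iSup_le fun K => iSup_le fun hK1 => iSup_le fun hK2 => le_of_eq (hcompact K hK2 hK1)
    refine ⟨hfirst, hζK, ?_, ?_⟩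
    · by_contra hno
      push_neg at hno
      have hcover : ∀ T : ℝ, ∃ u ∈ nhdsWithin T (Set.univ : Set ℝ), ζm u = 0 := by
        intro T
        have hT := hno T
        unfold MemSupport at hT
        push_neg at hT
        obtain ⟨ε, hε, h0⟩ := hT
        exact ⟨Metric.ball T ε, by rw [nhdsWithin_univ]; exact Metric.ball_mem_nhds T hε,
          le_antisymm h0 zero_le⟩
      have huz : ζm Set.univ = 0 :=
        measure_null_of_locally_null Set.univ fun x _ => hcover x
      rw [huz] at hfirst
      exact absurd hfirst (ENNReal.ofReal_pos.2 hDm1).not_ge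
    · intro T hT
      by_contra hTc
      obtain ⟨ε, hε, hball⟩ := Metric.isOpen_iff.1 hKclosed.isOpen_compl T hTc
      exact (hT ε hε).ne' (measure_mono_null hball hζK)
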